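/- Let k ∈ ℕ ∪ {0}, Z ∈ ℝ, h̃ ∈ C^k([0,∞)), and let ρ̃ ∈ C²([0,∞)) satisfy, for all r ≥ 0, ρ̃''(r) = 2[ h̃(r) − ∫₀¹ (Z ρ̃'(rσ) + 2 h̃(rσ)) σ² dσ ]. Then ρ̃ ∈ C^{k+2}([0,∞)), and for all r ≥ 0 the identity ρ̃^{(k+2)}(r) = 2[ h̃^{(k)}(r) − ∫₀¹ (Z ρ̃^{(k+1)}(rσ) + 2 h̃^{(k)}(rσ)) σ^{k+2} dσ ] holds; consequently ρ̃^{(k+2)}(0) = (2/(k+3))·[(k+1) h̃^{(k)}(0) − Z ρ̃^{(k+1)}(0)]. -/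

import Mathlib

open Set MeasureTheory

private lemma aux_reg {s : Set ℝ} (hs : UniqueDiffOn ℝ s) :
    ∀ (n m : ℕ) (f : ℝ → ℝ), ContDiffOn ℝ (n + m : ℕ) f s →
      ContDiffOn ℝ (m : ℕ) (iteratedDerivWithin n f s) s := by
  intro n
  induction n with
  | zero => intro m f hf; simpa using hf
  | succ n ih =>
    intro m f hf
    have h1 : ContDiffOn ℝ ((m+1 : ℕ)) (iteratedDerivWithin n f s) s := by
      apply ih
      have e : n + (m+1) = (n+1) + m := by ring
      rw [e]; exact hf
    have h2 : ContDiffOn ℝ (m : ℕ) (derivWithin (iteratedDerivWithin n f s) s) s := by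
      have := (contDiffOn_succ_iff_derivWithin (n := (m:WithTop ℕ∞)) hs).1 (by exact_mod_cast h1)
      exact this.2.2
    exact h2.congr (fun x hx => by rw [iteratedDerivWithin_succ])

private lemma aux_boot {s : Set ℝ} (hs : UniqueDiffOn ℝ s) (n : ℕ) (f : ℝ → ℝ)
    (hf : ContDiffOn ℝ (n : ℕ) f s)
    (hd : ContDiffOn ℝ 1 (iteratedDerivWithin n f s) s) :
    ContDiffOn ℝ ((n+1 : ℕ)) f s := by
  obtain ⟨hdiff, -, hcont⟩ :=
    (contDiffOn_succ_iff_derivWithin (n := (0:WithTop ℕ∞)) hs).1 (by exact_mod_cast hd)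
  rw [contDiffOn_nat_iff_continuousOn_differentiableOn_deriv hs]
  rw [contDiffOn_nat_iff_continuousOn_differentiableOn_deriv hs] at hf
  constructor
  · intro m hm
    rcases Nat.lt_or_ge m (n+1) with h | h
    · exact hf.1 m (Nat.lt_succ_iff.mp h)
    · have hmn : m = n+1 := le_antisymm hm h
      subst hmn
      refine (contDiffOn_zero.mp hcont).congr (fun x hx => ?_)
      rw [iteratedDerivWithin_succ]
  · intro m hm
    rcases Nat.lt_or_ge m n with h | h
    · exact hf.2 m h
    · have hmn : m = n := le_antisymm (Nat.lt_succ_iff.mp hm) h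
      subst hmn
      exact hdiff

private lemma aux_ext {g : ℝ → ℝ} (hg : ContDiffOn ℝ 1 g (Ici 0)) :
    ∃ G : ℝ → ℝ, ContDiff ℝ 1 G ∧ EqOn G g (Ici 0) ∧
      ∀ r ∈ Ici (0:ℝ), deriv G r = derivWithin g (Ici 0) r := by
  set c := derivWithin g (Ici 0) 0 with hc
  set G : ℝ → ℝ := fun r => if 0 ≤ r then g r else g 0 + c * r with hGdef
  have hEq : EqOn G g (Ici 0) := fun r hr => if_pos hr
  have hdw : ∀ r ∈ Ici (0:ℝ), HasDerivWithinAt g (derivWithin g (Ici 0) r) (Ici 0) r := by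
    intro r hr
    exact ((hg.differentiableOn one_ne_zero) r hr).hasDerivWithinAt
  have hG' : ∀ r : ℝ, HasDerivAt G (derivWithin g (Ici 0) (max r 0)) r := by
    intro r
    rcases lt_trichotomy r 0 with h | h | h
    · have hmax : max r 0 = 0 := max_eq_right h.le
      rw [hmax, ← hc]
      have hlin : HasDerivAt (fun x : ℝ => g 0 + c * x) c r := by
        simpa using ((hasDerivAt_id r).const_mul c).const_add (g 0)
      apply hlin.congr_of_eventuallyEq
      filter_upwards [Iio_mem_nhds h] with x hx
      exact if_neg (not_le.2 hx)
    · subst h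
      have hmax : max (0:ℝ) 0 = 0 := by simp
      rw [hmax, ← hc]
      have hIci : HasDerivWithinAt G c (Ici 0) 0 :=
        (hdw 0 Set.self_mem_Ici).congr (fun x hx => hEq hx) (hEq Set.self_mem_Ici)
      have hIic : HasDerivWithinAt G c (Iic 0) 0 := by
        have hlin : HasDerivAt (fun x : ℝ => g 0 + c * x) c 0 := by
          simpa using ((hasDerivAt_id (0:ℝ)).const_mul c).const_add (g 0)
        refine hlin.hasDerivWithinAt.congr (fun x hx => ?_) (by simp [hGdef])
        rcases eq_or_lt_of_le (Set.mem_Iic.mp hx) with h | h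
        · subst h; simp [hGdef]
        · simp [hGdef, not_le.2 h]
      have := hIic.union hIci
      rwa [Iic_union_Ici, hasDerivWithinAt_univ] at this
    · have hmax : max r 0 = r := max_eq_left h.le
      rw [hmax]
      have := (hdw r h.le).hasDerivAt (Ici_mem_nhds h)
      apply this.congr_of_eventuallyEq
      filter_upwards [Ici_mem_nhds h] with x hx
      exact hEq hx
  have hderiv : ∀ r, deriv G r = derivWithin g (Ici 0) (max r 0) := fun r => (hG' r).deriv
  have hcontd : ContinuousOn (derivWithin g (Ici 0)) (Ici 0) :=
    hg.continuousOn_derivWithin (uniqueDiffOn_Ici 0) le_rfl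
  refine ⟨G, ?_, hEq, fun r hr => by rw [hderiv r, max_eq_left hr]⟩
  rw [contDiff_one_iff_deriv]
  refine ⟨fun r => (hG' r).differentiableAt, ?_⟩
  have : deriv G = fun r => derivWithin g (Ici 0) (max r 0) := funext hderiv
  rw [this]
  exact hcontd.comp_continuous (continuous_id.max continuous_const)
    (fun x => Set.mem_Ici.mpr (le_max_right _ _))

private lemma aux_cont (W : ℝ → ℝ) (hW : Continuous W) (m : ℕ) :
    Continuous fun r : ℝ => ∫ σ in (0:ℝ)..1, W (r*σ) * σ^m := by
  apply intervalIntegral.continuous_parametric_intervalIntegral_of_continuous'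
    (f := fun r σ => W (r*σ) * σ^m)
  exact ((hW.comp (continuous_fst.mul continuous_snd)).mul (continuous_snd.pow m))

private lemma aux_deriv_int (W : ℝ → ℝ) (hW : ContDiff ℝ 1 W) (m : ℕ) (x₀ : ℝ) :
    HasDerivAt (fun r : ℝ => ∫ σ in (0:ℝ)..1, W (r*σ) * σ^m)
      (∫ σ in (0:ℝ)..1, deriv W (x₀*σ) * σ^(m+1)) x₀ := by
  have hW' : Continuous (deriv W) := hW.continuous_deriv le_rfl
  obtain ⟨C, hC⟩ := (isCompact_Icc (a := -(|x₀|+1)) (b := |x₀|+1)).exists_bound_of_continuousOn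
    (hW'.continuousOn)
  have key := intervalIntegral.hasDerivAt_integral_of_dominated_loc_of_deriv_le
    (F := fun x σ => W (x*σ) * σ^m) (F' := fun x σ => deriv W (x*σ) * σ^(m+1))
    (x₀ := x₀) (a := (0:ℝ)) (b := 1) (μ := volume) (bound := fun _ => max C 0)
    (s := Metric.ball x₀ 1) (Metric.ball_mem_nhds x₀ one_pos)
    ?_ ?_ ?_ ?_ ?_ ?_
  · exact key.2
  · filter_upwards with x
    exact ((hW.continuous.comp (continuous_const.mul continuous_id)).mul
      (continuous_id.pow m)).aestronglyMeasurable
  · exact ((hW.continuous.comp (continuous_const.mul continuous_id)).mul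
      (continuous_id.pow m)).intervalIntegrable 0 1
  · exact ((hW'.comp (continuous_const.mul continuous_id)).mul
      (continuous_id.pow (m+1))).aestronglyMeasurable
  · apply ae_of_all
    intro σ hσ x hx
    have hσ1 : |σ| ≤ 1 := by
      rw [Set.uIoc_of_le (by norm_num : (0:ℝ) ≤ 1)] at hσ
      rw [abs_of_pos hσ.1]
      exact hσ.2
    have hxσ : x * σ ∈ Icc (-(|x₀|+1)) (|x₀|+1) := by
      have hxb : |x| ≤ |x₀| + 1 := by
        have := abs_sub_abs_le_abs_sub x x₀
        simp only [Metric.mem_ball, Real.dist_eq] at hx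
        linarith [hx.le]
      have : |x * σ| ≤ |x₀| + 1 := by
        rw [abs_mul]
        calc |x| * |σ| ≤ (|x₀|+1) * 1 := by
              apply mul_le_mul hxb hσ1 (abs_nonneg _) (by positivity)
          _ = |x₀| + 1 := by ring
      rw [Set.mem_Icc, ← abs_le]
      exact this
    calc ‖deriv W (x*σ) * σ^(m+1)‖ = ‖deriv W (x*σ)‖ * |σ|^(m+1) := by
          rw [norm_mul]; simp [abs_pow]
      _ ≤ C * 1 := by
          apply mul_le_mul (hC _ hxσ) (pow_le_one₀ (abs_nonneg _) hσ1)
            (by positivity) ((norm_nonneg _).trans (hC _ hxσ))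
      _ ≤ max C 0 := by simp
  · exact intervalIntegrable_const
  · apply ae_of_all
    intro σ _ x _
    have h1 : HasDerivAt W (deriv W (x*σ)) (x*σ) :=
      ((hW.differentiable one_ne_zero) (x*σ)).hasDerivAt
    have h2 : HasDerivAt (fun y : ℝ => y * σ) σ x := by
      simpa using (hasDerivAt_id x).mul_const σ
    have h3 := (h1.comp x h2).mul_const (σ^m)
    exact h3.congr_deriv (by ring)

private lemma aux_main {w : ℝ → ℝ} (hw : ContDiffOn ℝ 1 w (Ici 0)) (m : ℕ) :
    ContDiffOn ℝ 1 (fun r => ∫ σ in (0:ℝ)..1, w (r*σ) * σ^m) (Ici 0) ∧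
    ∀ r ∈ Ici (0:ℝ), derivWithin (fun r => ∫ σ in (0:ℝ)..1, w (r*σ) * σ^m) (Ici 0) r
      = ∫ σ in (0:ℝ)..1, derivWithin w (Ici 0) (r*σ) * σ^(m+1) := by
  obtain ⟨W, hW, hWg, hW'⟩ := aux_ext hw
  set F := fun r : ℝ => ∫ σ in (0:ℝ)..1, w (r*σ) * σ^m with hF
  set FW := fun r : ℝ => ∫ σ in (0:ℝ)..1, W (r*σ) * σ^m with hFW
  have hFeq : EqOn F FW (Ici 0) := by
    intro r hr
    apply intervalIntegral.integral_congr
    intro σ hσ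
    rw [uIcc_of_le (by norm_num : (0:ℝ) ≤ 1)] at hσ
    show w (r*σ) * σ^m = W (r*σ) * σ^m
    rw [hWg (mul_nonneg hr hσ.1)]
  have hkey : ∀ r ∈ Ici (0:ℝ), HasDerivWithinAt F
      (∫ σ in (0:ℝ)..1, derivWithin w (Ici 0) (r*σ) * σ^(m+1)) (Ici 0) r := by
    intro r hr
    have h1 := (aux_deriv_int W hW m r).hasDerivWithinAt (s := Ici 0)
    have h2 : (∫ σ in (0:ℝ)..1, deriv W (r*σ) * σ^(m+1))
        = ∫ σ in (0:ℝ)..1, derivWithin w (Ici 0) (r*σ) * σ^(m+1) := by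
      apply intervalIntegral.integral_congr
      intro σ hσ
      rw [uIcc_of_le (by norm_num : (0:ℝ) ≤ 1)] at hσ
      show deriv W (r*σ) * σ^(m+1) = derivWithin w (Ici 0) (r*σ) * σ^(m+1)
      rw [hW' _ (mul_nonneg hr hσ.1)]
    rw [h2] at h1
    exact h1.congr (fun x hx => hFeq hx) (hFeq hr)
  have hdw : ∀ r ∈ Ici (0:ℝ), derivWithin F (Ici 0) r
      = ∫ σ in (0:ℝ)..1, derivWithin w (Ici 0) (r*σ) * σ^(m+1) := by
    intro r hr
    exact (hkey r hr).derivWithin ((uniqueDiffOn_Ici 0) r hr)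
  refine ⟨?_, hdw⟩
  have : (1 : WithTop ℕ∞) = 0 + 1 := by norm_num
  rw [this, contDiffOn_succ_iff_derivWithin (uniqueDiffOn_Ici 0)]
  refine ⟨fun r hr => ((hkey r hr).differentiableWithinAt).mono (subset_refl _), by simp, ?_⟩
  rw [contDiffOn_zero]
  have hcont : Continuous fun r : ℝ => ∫ σ in (0:ℝ)..1, deriv W (r*σ) * σ^(m+1) :=
    aux_cont (deriv W) (hW.continuous_deriv le_rfl) (m+1)
  apply ContinuousOn.congr (hcont.continuousOn)
  intro r hr
  rw [hdw r hr]
  apply intervalIntegral.integral_congr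
  intro σ hσ
  rw [uIcc_of_le (by norm_num : (0:ℝ) ≤ 1)] at hσ
  show derivWithin w (Ici 0) (r*σ) * σ^(m+1) = deriv W (r*σ) * σ^(m+1)
  rw [hW' _ (mul_nonneg hr hσ.1)]

/-- If `h̃ ∈ C^k([0,∞))` and `ρ̃ ∈ C²([0,∞))` satisfies
`ρ̃''(r) = 2[h̃(r) − ∫₀¹ (Zρ̃'(rσ) + 2h̃(rσ))σ² dσ]` for all `r ≥ 0`, then
`ρ̃ ∈ C^{k+2}([0,∞))`, the corresponding identity holds for the `(k+2)`-nd derivative, and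
`ρ̃^{(k+2)}(0) = (2/(k+3))[(k+1)h̃^{(k)}(0) − Zρ̃^{(k+1)}(0)]`. -/
theorem higher_deriv_formula (k : ℕ) (Z : ℝ) (ρ h : ℝ → ℝ)
    (hh : ContDiffOn ℝ k h (Ici 0))
    (hρ : ContDiffOn ℝ 2 ρ (Ici 0))
    (heq : ∀ r ∈ Ici (0:ℝ),
      iteratedDerivWithin 2 ρ (Ici 0) r =
        2 * (h r - ∫ σ in (0:ℝ)..1,
          (Z * iteratedDerivWithin 1 ρ (Ici 0) (r*σ) + 2 * h (r*σ)) * σ^2)) :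
    ContDiffOn ℝ (k+2) ρ (Ici 0) ∧
    (∀ r ∈ Ici (0:ℝ),
      iteratedDerivWithin (k+2) ρ (Ici 0) r =
        2 * (iteratedDerivWithin k h (Ici 0) r - ∫ σ in (0:ℝ)..1,
          (Z * iteratedDerivWithin (k+1) ρ (Ici 0) (r*σ)
            + 2 * iteratedDerivWithin k h (Ici 0) (r*σ)) * σ^(k+2))) ∧
    iteratedDerivWithin (k+2) ρ (Ici 0) 0 =
      (2 / ((k:ℝ)+3)) * (((k:ℝ)+1) * iteratedDerivWithin k h (Ici 0) 0
        - Z * iteratedDerivWithin (k+1) ρ (Ici 0) 0) := by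
  have uD : UniqueDiffOn ℝ (Ici (0:ℝ)) := uniqueDiffOn_Ici 0
  suffices H : ∀ (k : ℕ), ContDiffOn ℝ k h (Ici 0) →
      (ContDiffOn ℝ (k+2) ρ (Ici 0) ∧
      ∀ r ∈ Ici (0:ℝ),
        iteratedDerivWithin (k+2) ρ (Ici 0) r =
          2 * (iteratedDerivWithin k h (Ici 0) r - ∫ σ in (0:ℝ)..1,
            (Z * iteratedDerivWithin (k+1) ρ (Ici 0) (r*σ)
              + 2 * iteratedDerivWithin k h (Ici 0) (r*σ)) * σ^(k+2))) by
    obtain ⟨h1, h2⟩ := H k hh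
    refine ⟨h1, h2, ?_⟩
    have h0 := h2 0 Set.self_mem_Ici
    simp only [zero_mul] at h0
    rw [intervalIntegral.integral_const_mul, integral_pow] at h0
    rw [h0]
    have hk3 : ((k:ℝ)+3) ≠ 0 := by positivity
    push_cast
    rw [one_pow, zero_pow (by omega : k + 2 + 1 ≠ 0)]
    field_simp
    ring
  clear hh
  intro k
  induction k with
  | zero =>
    intro hh
    refine ⟨by simpa using hρ, ?_⟩
    intro r hr
    simpa using heq r hr
  | succ k ih =>
    intro hk1
    obtain ⟨hC, hid⟩ := ih (hk1.of_le (by exact_mod_cast Nat.le_succ k))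
    set g := iteratedDerivWithin (k+1) ρ (Ici 0) with hgdef
    set u := iteratedDerivWithin k h (Ici 0) with hudef
    have hg1 : ContDiffOn ℝ 1 g (Ici 0) := by
      have := aux_reg uD (k+1) 1 ρ (by exact_mod_cast hC)
      exact_mod_cast this
    have hu1 : ContDiffOn ℝ 1 u (Ici 0) := by
      have := aux_reg uD k 1 h (by exact_mod_cast hk1)
      exact_mod_cast this
    set w := fun t => Z * g t + 2 * u t with hwdef
    have hw1 : ContDiffOn ℝ 1 w (Ici 0) :=
      (contDiffOn_const.mul hg1).add (contDiffOn_const.mul hu1)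
    obtain ⟨hFC, hFd⟩ := aux_main hw1 (k+2)
    set F := fun r : ℝ => ∫ σ in (0:ℝ)..1, w (r*σ) * σ^(k+2) with hFdef
    have hidw : ∀ r ∈ Ici (0:ℝ),
        iteratedDerivWithin (k+2) ρ (Ici 0) r = 2 * (u r - F r) := by
      intro r hr
      rw [hid r hr]
    have hEqOn : EqOn (iteratedDerivWithin (k+2) ρ (Ici 0))
        (fun r => 2 * (u r - F r)) (Ici 0) := fun r hr => hidw r hr
    have hsm : ContDiffOn ℝ 1 (fun r => 2 * (u r - F r)) (Ici 0) :=
      contDiffOn_const.mul (hu1.sub hFC)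
    have hD2 : ContDiffOn ℝ 1 (iteratedDerivWithin (k+2) ρ (Ici 0)) (Ici 0) :=
      hsm.congr hEqOn
    have hC' : ContDiffOn ℝ ((k+3 : ℕ)) ρ (Ici 0) :=
      aux_boot uD (k+2) ρ (by exact_mod_cast hC) hD2
    have hwd : ∀ t ∈ Ici (0:ℝ), derivWithin w (Ici 0) t =
        Z * iteratedDerivWithin (k+2) ρ (Ici 0) t
          + 2 * iteratedDerivWithin (k+1) h (Ici 0) t := by
      intro t ht
      have hgt : DifferentiableWithinAt ℝ g (Ici 0) t := hg1.differentiableOn one_ne_zero t ht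
      have hut : DifferentiableWithinAt ℝ u (Ici 0) t := hu1.differentiableOn one_ne_zero t ht
      have hud : UniqueDiffWithinAt ℝ (Ici (0:ℝ)) t := uD t ht
      rw [hwdef]
      rw [derivWithin_fun_add (hgt.const_mul Z) (hut.const_mul 2),
        derivWithin_const_mul Z hgt, derivWithin_const_mul 2 hut,
        hgdef, hudef, ← iteratedDerivWithin_succ, ← iteratedDerivWithin_succ]
    constructor
    · exact_mod_cast hC'
    · intro r hr
      have hud : UniqueDiffWithinAt ℝ (Ici (0:ℝ)) r := uD r hr
      have e0 : k + 1 + 2 = (k + 2) + 1 := by ring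
      rw [e0, iteratedDerivWithin_succ, derivWithin_congr hEqOn (hidw r hr)]
      have hudiff : DifferentiableWithinAt ℝ u (Ici 0) r := hu1.differentiableOn one_ne_zero r hr
      have hFdiff : DifferentiableWithinAt ℝ F (Ici 0) r := hFC.differentiableOn one_ne_zero r hr
      rw [derivWithin_const_mul (d := fun y => u y - F y) 2 (hudiff.sub hFdiff),
        derivWithin_fun_sub hudiff hFdiff, hFd r hr]
      have e1 : derivWithin u (Ici 0) r = iteratedDerivWithin (k+1) h (Ici 0) r := by
        rw [hudef, ← iteratedDerivWithin_succ]
      rw [e1]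
      congr 1
      congr 1
      apply intervalIntegral.integral_congr
      intro σ hσ
      rw [uIcc_of_le (by norm_num : (0:ℝ) ≤ 1)] at hσ
      show derivWithin w (Ici 0) (r*σ) * σ^(k+2+1) =
        (Z * iteratedDerivWithin (k+2) ρ (Ici 0) (r*σ)
          + 2 * iteratedDerivWithin (k+1) h (Ici 0) (r*σ)) * σ^(k+1+2)
      rw [hwd _ (mul_nonneg hr hσ.1)]
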